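/- Let Ω ⊆ ℝ² be an open set with coordinates (u,v) and f > 0 a real number (the focal length). Let ρ, ρ* : Ω → ℝ be positive differentiable functions and n, n* : Ω → ℝ³ be differentiable maps with |n| = |n*| = 1, n₃ < 0 and n₃* < 0 on Ω. Set m = ρ·(1, n₁, n₂, n₃) : Ω → ℝ⁴ and m* = ρ*·(1, n₁*, n₂*, n₃*), and suppose m* = A m on Ω for some scaled Lorentz transformation A. Assume both satisfy the perspective integrability constraint: at every point (u,v) ∈ Ω, u·c^{2,3}_u + v·c^{2,3}_v + f·c^{2,4}_v − f·c^{3,4}_u = 0, where the c^{i,j}_k are formed from m, and the analogous equation holds with the quantities formed from m*. Assume the surface is non-degenerate: the 17 real-valued functions on Ω given by f·c^{i,j}_u and f·c^{i,j}_v for all 1 ≤ i < j ≤ 4, together with (u,v) ↦ u·c^{i,j}_u(u,v) + v·c^{i,j}_v(u,v) for (i,j) ∈ {(1,2),(1,3),(1,4),(2,4),(3,4)}, are linearly independent over ℝ. Then A = α·I₄ for some α > 0, where I₄ is the 4×4 identity matrix. -/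

import Mathlib

/-- The Minkowski quadratic form on ℝ⁴: q(t,x,y,z) = x² + y² + z² − t². -/
def mink (x : Fin 4 → ℝ) : ℝ := (x 1)^2 + (x 2)^2 + (x 3)^2 - (x 0)^2

/-- A real 4×4 matrix is a Lorentz transformation if it preserves the Minkowski form. -/
def IsLorentz (A : Matrix (Fin 4) (Fin 4) ℝ) : Prop :=
  ∀ x : Fin 4 → ℝ, mink (A.mulVec x) = mink x

/-- A scaled Lorentz transformation: a nonzero multiple of a Lorentz transformation. -/
def IsScaledLorentz (A : Matrix (Fin 4) (Fin 4) ℝ) : Prop :=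
  ∃ s : ℝ, s ≠ 0 ∧ ∃ B : Matrix (Fin 4) (Fin 4) ℝ, IsLorentz B ∧ A = s • B

/-- Partial derivative with respect to the first coordinate u. -/
noncomputable def pu (g : ℝ × ℝ → ℝ) (x : ℝ × ℝ) : ℝ := fderiv ℝ g x (1, 0)

/-- Partial derivative with respect to the second coordinate v. -/
noncomputable def pv (g : ℝ × ℝ → ℝ) (x : ℝ × ℝ) : ℝ := fderiv ℝ g x (0, 1)

/-- c^{i,j}_k = c_j·∂_k c_i − c_i·∂_k c_j, where d is the partial derivative ∂_k. -/
noncomputable def cmin (d : (ℝ × ℝ → ℝ) → ℝ × ℝ → ℝ) (c : Fin 4 → ℝ × ℝ → ℝ)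
    (i j : Fin 4) (x : ℝ × ℝ) : ℝ :=
  c j x * d (c i) x - c i x * d (c j) x


/-- Auxiliary: the signature vector of the Minkowski form. -/
noncomputable def lvec : Fin 4 → ℝ := fun i => if i = 0 then -1 else 1

theorem lorentz_entries (B : Matrix (Fin 4) (Fin 4) ℝ) (hB : IsLorentz B) :
    (∀ i j, B 1 i * B 1 j + B 2 i * B 2 j + B 3 i * B 3 j - B 0 i * B 0 j
      = Matrix.diagonal lvec i j) ∧
    (∀ i j, B i 1 * B j 1 + B i 2 * B j 2 + B i 3 * B j 3 - B i 0 * B j 0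
      = Matrix.diagonal lvec i j) := by
  have hBe : ∀ u w : Fin 4 → ℝ, (B.mulVec u) 1 * (B.mulVec w) 1 + (B.mulVec u) 2 * (B.mulVec w) 2
      + (B.mulVec u) 3 * (B.mulVec w) 3 - (B.mulVec u) 0 * (B.mulVec w) 0
      = u 1 * w 1 + u 2 * w 2 + u 3 * w 3 - u 0 * w 0 := by
    intro u w
    have h1 := hB (u + w); have h2 := hB u; have h3 := hB w
    rw [Matrix.mulVec_add] at h1
    simp only [mink, Pi.add_apply] at h1 h2 h3
    linear_combination (h1 - h2 - h3) / 2
  have col : ∀ i j, B 1 i * B 1 j + B 2 i * B 2 j + B 3 i * B 3 j - B 0 i * B 0 j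
      = Matrix.diagonal lvec i j := by
    intro i j
    have h := hBe (Pi.single i 1) (Pi.single j 1)
    simp only [Matrix.mulVec_single_one, Matrix.col_apply] at h
    rw [h]
    rw [Matrix.diagonal_apply]
    fin_cases i <;> fin_cases j <;>
      simp (config := { decide := true }) [Pi.single_apply, lvec, Matrix.diagonal_apply]
  refine ⟨col, ?_⟩
  set J : Matrix (Fin 4) (Fin 4) ℝ := Matrix.diagonal lvec with hJ
  have hJJ : J * J = 1 := by
    rw [hJ, Matrix.diagonal_mul_diagonal]
    have h2 : (fun i => lvec i * lvec i) = fun _ => (1:ℝ) := by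
      funext i; fin_cases i <;> simp (config := { decide := true }) [lvec]
    rw [h2]
    exact Matrix.diagonal_one
  have hmat : B.transpose * J * B = J := by
    ext i j
    rw [hJ, Matrix.mul_apply]
    simp only [Matrix.mul_diagonal, Matrix.transpose_apply]
    rw [Fin.sum_univ_four,
      (by simp (config := { decide := true }) [lvec] : lvec 0 = -1),
      (by simp (config := { decide := true }) [lvec] : lvec 1 = 1),
      (by simp (config := { decide := true }) [lvec] : lvec 2 = 1),
      (by simp (config := { decide := true }) [lvec] : lvec 3 = 1)]
    linear_combination col i j
  have hleft : (J * B.transpose * J) * B = 1 := by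
    calc (J * B.transpose * J) * B = J * (B.transpose * J * B) := by
          rw [Matrix.mul_assoc, Matrix.mul_assoc, Matrix.mul_assoc]
    _ = 1 := by rw [hmat, hJJ]
  have hright : B * (J * B.transpose * J) = 1 := mul_eq_one_comm.mpr hleft
  have hrow : B * J * B.transpose = J := by
    have h := congrArg (· * J) hright
    simp only [Matrix.mul_assoc, Matrix.one_mul] at h
    rw [hJJ] at h
    simpa [Matrix.mul_assoc] using h
  intro i j
  have h : (B * J * B.transpose) i j = J i j := by rw [hrow]
  rw [hJ, Matrix.mul_apply] at h
  simp only [Matrix.mul_diagonal, Matrix.transpose_apply] at h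
  rw [Fin.sum_univ_four,
    (by simp (config := { decide := true }) [lvec] : lvec 0 = -1),
    (by simp (config := { decide := true }) [lvec] : lvec 1 = 1),
    (by simp (config := { decide := true }) [lvec] : lvec 2 = 1),
    (by simp (config := { decide := true }) [lvec] : lvec 3 = 1)] at h
  linear_combination h

theorem cmin_transform (A : Matrix (Fin 4) (Fin 4) ℝ) (m mstar : Fin 4 → ℝ × ℝ → ℝ)
    (d : (ℝ × ℝ → ℝ) → ℝ × ℝ → ℝ) (x : ℝ × ℝ)
    (hval : ∀ i, mstar i x = ∑ j : Fin 4, A i j * m j x)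
    (hder : ∀ i, d (mstar i) x = ∑ j : Fin 4, A i j * d (m j) x) (i j : Fin 4) :
    cmin d mstar i j x = ∑ p : Fin 4, ∑ q : Fin 4, A i p * A j q * cmin d m p q x := by
  simp only [cmin, hval, hder, Fin.sum_univ_four]
  ring

theorem fderiv_rel (Ω : Set (ℝ × ℝ)) (hΩ : IsOpen Ω) (A : Matrix (Fin 4) (Fin 4) ℝ)
    (m mstar : Fin 4 → ℝ × ℝ → ℝ)
    (hdm : ∀ y ∈ Ω, ∀ j : Fin 4, DifferentiableAt ℝ (m j) y)
    (hrel : ∀ y ∈ Ω, ∀ i : Fin 4, mstar i y = ∑ j : Fin 4, A i j * m j y)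
    (y : ℝ × ℝ) (hy : y ∈ Ω) (i : Fin 4) (w : ℝ × ℝ) :
    fderiv ℝ (mstar i) y w = ∑ j : Fin 4, A i j * fderiv ℝ (m j) y w := by
  have heq : mstar i =ᶠ[nhds y] (fun z => ∑ j : Fin 4, A i j * m j z) := by
    filter_upwards [hΩ.mem_nhds hy] with z hz
    exact hrel z hz i
  rw [heq.fderiv_eq, fderiv_fun_sum (fun j _ => (hdm y hy j).const_mul (A i j))]
  rw [ContinuousLinearMap.sum_apply]
  refine Finset.sum_congr rfl fun j _ => ?_
  rw [fderiv_const_mul (hdm y hy j) (A i j)]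
  simp

set_option maxHeartbeats 2000000

/-- Under perspective projection, a scaled Lorentz transformation relating two
integrable, non-degenerate photometric stereo solutions must be a positive multiple
of the identity: the problem is well-posed. -/
theorem perspective_uniqueness
    (Ω : Set (ℝ × ℝ)) (hΩ : IsOpen Ω) (f : ℝ) (hf : 0 < f)
    (ρ ρs n1 n2 n3 n1s n2s n3s : ℝ × ℝ → ℝ)
    (hρ : ∀ x ∈ Ω, DifferentiableAt ℝ ρ x) (hρs : ∀ x ∈ Ω, DifferentiableAt ℝ ρs x)
    (hρpos : ∀ x ∈ Ω, 0 < ρ x) (hρspos : ∀ x ∈ Ω, 0 < ρs x)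
    (hn1 : ∀ x ∈ Ω, DifferentiableAt ℝ n1 x) (hn2 : ∀ x ∈ Ω, DifferentiableAt ℝ n2 x)
    (hn3 : ∀ x ∈ Ω, DifferentiableAt ℝ n3 x)
    (hn1s : ∀ x ∈ Ω, DifferentiableAt ℝ n1s x) (hn2s : ∀ x ∈ Ω, DifferentiableAt ℝ n2s x)
    (hn3s : ∀ x ∈ Ω, DifferentiableAt ℝ n3s x)
    (hunit : ∀ x ∈ Ω, (n1 x)^2 + (n2 x)^2 + (n3 x)^2 = 1)
    (hunits : ∀ x ∈ Ω, (n1s x)^2 + (n2s x)^2 + (n3s x)^2 = 1)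
    (hn3neg : ∀ x ∈ Ω, n3 x < 0) (hn3sneg : ∀ x ∈ Ω, n3s x < 0)
    (m mstar : Fin 4 → ℝ × ℝ → ℝ)
    (hm : m = ![ρ, fun x => ρ x * n1 x, fun x => ρ x * n2 x, fun x => ρ x * n3 x])
    (hms : mstar = ![ρs, fun x => ρs x * n1s x, fun x => ρs x * n2s x,
      fun x => ρs x * n3s x])
    (A : Matrix (Fin 4) (Fin 4) ℝ) (hA : IsScaledLorentz A)
    (hrel : ∀ x ∈ Ω, ∀ i : Fin 4, mstar i x = ∑ j : Fin 4, A i j * m j x)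
    (hint : ∀ x ∈ Ω,
      x.1 * cmin pu m 1 2 x + x.2 * cmin pv m 1 2 x
        + f * cmin pv m 1 3 x - f * cmin pu m 2 3 x = 0)
    (hints : ∀ x ∈ Ω,
      x.1 * cmin pu mstar 1 2 x + x.2 * cmin pv mstar 1 2 x
        + f * cmin pv mstar 1 3 x - f * cmin pu mstar 2 3 x = 0)
    (hnondeg : LinearIndependent ℝ
      (fun (k : Fin 17) (x : Ω) =>
        (![fun y => f * cmin pu m 0 1 y, fun y => f * cmin pu m 0 2 y,
           fun y => f * cmin pu m 0 3 y, fun y => f * cmin pu m 1 2 y,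
           fun y => f * cmin pu m 1 3 y, fun y => f * cmin pu m 2 3 y,
           fun y => f * cmin pv m 0 1 y, fun y => f * cmin pv m 0 2 y,
           fun y => f * cmin pv m 0 3 y, fun y => f * cmin pv m 1 2 y,
           fun y => f * cmin pv m 1 3 y, fun y => f * cmin pv m 2 3 y,
           fun y => y.1 * cmin pu m 0 1 y + y.2 * cmin pv m 0 1 y,
           fun y => y.1 * cmin pu m 0 2 y + y.2 * cmin pv m 0 2 y,
           fun y => y.1 * cmin pu m 0 3 y + y.2 * cmin pv m 0 3 y,
           fun y => y.1 * cmin pu m 1 3 y + y.2 * cmin pv m 1 3 y,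
           fun y => y.1 * cmin pu m 2 3 y + y.2 * cmin pv m 2 3 y] k) (x : ℝ × ℝ))) :
    ∃ α : ℝ, 0 < α ∧ A = α • (1 : Matrix (Fin 4) (Fin 4) ℝ) := by
  obtain ⟨s, hs, B, hB, hAB⟩ := hA
  -- basic differentiability of the components of m
  have hdm : ∀ y ∈ Ω, ∀ j : Fin 4, DifferentiableAt ℝ (m j) y := by
    intro y hy j
    rw [hm]
    fin_cases j
    · exact hρ y hy
    · exact (hρ y hy).mul (hn1 y hy)
    · exact (hρ y hy).mul (hn2 y hy)
    · exact (hρ y hy).mul (hn3 y hy)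
  have hder := fderiv_rel Ω hΩ A m mstar hdm hrel
  have hpuS : ∀ y ∈ Ω, ∀ i : Fin 4, pu (mstar i) y = ∑ j : Fin 4, A i j * pu (m j) y := by
    intro y hy i; exact hder y hy i (1, 0)
  have hpvS : ∀ y ∈ Ω, ∀ i : Fin 4, pv (mstar i) y = ∑ j : Fin 4, A i j * pv (m j) y := by
    intro y hy i; exact hder y hy i (0, 1)
  have hcminU : ∀ y ∈ Ω, ∀ i j : Fin 4,
      cmin pu mstar i j y = ∑ p : Fin 4, ∑ q : Fin 4, A i p * A j q * cmin pu m p q y :=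
    fun y hy i j => cmin_transform A m mstar pu y (fun i => hrel y hy i)
      (fun i => hpuS y hy i) i j
  have hcminV : ∀ y ∈ Ω, ∀ i j : Fin 4,
      cmin pv mstar i j y = ∑ p : Fin 4, ∑ q : Fin 4, A i p * A j q * cmin pv m p q y :=
    fun y hy i j => cmin_transform A m mstar pv y (fun i => hrel y hy i)
      (fun i => hpvS y hy i) i j
  -- coefficient extraction via linear independence
  have hcoef := Fintype.linearIndependent_iff.mp hnondeg
    ![-(A 2 0 * A 3 1 - A 2 1 * A 3 0),
      -(A 2 0 * A 3 2 - A 2 2 * A 3 0),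
      -(A 2 0 * A 3 3 - A 2 3 * A 3 0),
      -(A 2 1 * A 3 2 - A 2 2 * A 3 1),
      -(A 2 1 * A 3 3 - A 2 3 * A 3 1),
      (A 1 1 * A 2 2 - A 1 2 * A 2 1) - (A 2 2 * A 3 3 - A 2 3 * A 3 2),
      A 1 0 * A 3 1 - A 1 1 * A 3 0,
      A 1 0 * A 3 2 - A 1 2 * A 3 0,
      A 1 0 * A 3 3 - A 1 3 * A 3 0,
      A 1 1 * A 3 2 - A 1 2 * A 3 1,
      (A 1 1 * A 3 3 - A 1 3 * A 3 1) - (A 1 1 * A 2 2 - A 1 2 * A 2 1),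
      A 1 2 * A 3 3 - A 1 3 * A 3 2,
      A 1 0 * A 2 1 - A 1 1 * A 2 0,
      A 1 0 * A 2 2 - A 1 2 * A 2 0,
      A 1 0 * A 2 3 - A 1 3 * A 2 0,
      A 1 1 * A 2 3 - A 1 3 * A 2 1,
      A 1 2 * A 2 3 - A 1 3 * A 2 2]
    (by
      funext x
      obtain ⟨y, hy⟩ := x
      have H := hints y hy
      have H0 := hint y hy
      rw [hcminU y hy 1 2, hcminU y hy 2 3, hcminV y hy 1 2, hcminV y hy 1 3] at H
      simp only [cmin, Fin.sum_univ_four] at H H0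
      simp only [Finset.sum_apply, Pi.smul_apply, smul_eq_mul, Pi.zero_apply,
        Fin.sum_univ_succ, Fin.sum_univ_zero, Matrix.cons_val_zero, Matrix.cons_val_succ,
        cmin, add_zero]
      linear_combination H - (A 1 1 * A 2 2 - A 1 2 * A 2 1) * H0)
  have E0 : -(A 2 0 * A 3 1 - A 2 1 * A 3 0) = 0 := hcoef 0
  have E1 : -(A 2 0 * A 3 2 - A 2 2 * A 3 0) = 0 := hcoef 1
  have E2 : -(A 2 0 * A 3 3 - A 2 3 * A 3 0) = 0 := hcoef 2
  have E3 : -(A 2 1 * A 3 2 - A 2 2 * A 3 1) = 0 := hcoef 3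
  have E4 : -(A 2 1 * A 3 3 - A 2 3 * A 3 1) = 0 := hcoef 4
  have E5 : (A 1 1 * A 2 2 - A 1 2 * A 2 1) - (A 2 2 * A 3 3 - A 2 3 * A 3 2) = 0 := hcoef 5
  have E6 : A 1 0 * A 3 1 - A 1 1 * A 3 0 = 0 := hcoef 6
  have E7 : A 1 0 * A 3 2 - A 1 2 * A 3 0 = 0 := hcoef 7
  have E8 : A 1 0 * A 3 3 - A 1 3 * A 3 0 = 0 := hcoef 8
  have E9 : A 1 1 * A 3 2 - A 1 2 * A 3 1 = 0 := hcoef 9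
  have E10 : (A 1 1 * A 3 3 - A 1 3 * A 3 1) - (A 1 1 * A 2 2 - A 1 2 * A 2 1) = 0 := hcoef 10
  have E11 : A 1 2 * A 3 3 - A 1 3 * A 3 2 = 0 := hcoef 11
  have E12 : A 1 0 * A 2 1 - A 1 1 * A 2 0 = 0 := hcoef 12
  have E13 : A 1 0 * A 2 2 - A 1 2 * A 2 0 = 0 := hcoef 13
  have E14 : A 1 0 * A 2 3 - A 1 3 * A 2 0 = 0 := hcoef 14
  have E15 : A 1 1 * A 2 3 - A 1 3 * A 2 1 = 0 := hcoef 15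
  have E16 : A 1 2 * A 2 3 - A 1 3 * A 2 2 = 0 := hcoef 16
  -- Lorentz structure (rows and columns of A)
  have hlv := lorentz_entries B hB
  have hAe : ∀ i j, A i j = s * B i j := by
    intro i j; rw [hAB]; simp
  have hdiag : ∀ i j : Fin 4, Matrix.diagonal lvec i j
      = if i = j then (if i = 0 then (-1:ℝ) else 1) else 0 := by
    intro i j; rw [Matrix.diagonal_apply]; rfl
  have hrA : ∀ i j : Fin 4, A i 1 * A j 1 + A i 2 * A j 2 + A i 3 * A j 3 - A i 0 * A j 0
      = s^2 * (if i = j then (if i = 0 then (-1:ℝ) else 1) else 0) := by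
    intro i j
    have h := hlv.2 i j
    rw [hdiag] at h
    simp only [hAe]
    linear_combination s^2 * h
  have hcA : ∀ i j : Fin 4, A 1 i * A 1 j + A 2 i * A 2 j + A 3 i * A 3 j - A 0 i * A 0 j
      = s^2 * (if i = j then (if i = 0 then (-1:ℝ) else 1) else 0) := by
    intro i j
    have h := hlv.1 i j
    rw [hdiag] at h
    simp only [hAe]
    linear_combination s^2 * h
  have hr11 : A 1 1 * A 1 1 + A 1 2 * A 1 2 + A 1 3 * A 1 3 - A 1 0 * A 1 0 = s^2 := by
    have h := hrA 1 1; norm_num at h; exact h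
  have hr22 : A 2 1 * A 2 1 + A 2 2 * A 2 2 + A 2 3 * A 2 3 - A 2 0 * A 2 0 = s^2 := by
    have h := hrA 2 2; norm_num [Fin.ext_iff] at h; exact h
  have hr12 : A 1 1 * A 2 1 + A 1 2 * A 2 2 + A 1 3 * A 2 3 - A 1 0 * A 2 0 = 0 := by
    have h := hrA 1 2; norm_num [Fin.ext_iff] at h; exact h
  -- the scale factor of the spatial minors
  have hs2 : (0:ℝ) < s^2 := by positivity
  have hlam2 : (A 1 1 * A 2 2 - A 1 2 * A 2 1)^2 = s^4 := by
    linear_combination (A 2 1 * A 2 1 + A 2 2 * A 2 2 + A 2 3 * A 2 3 - A 2 0 * A 2 0) * hr11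
      + s^2 * hr22 - (A 1 1 * A 2 1 + A 1 2 * A 2 2 + A 1 3 * A 2 3 - A 1 0 * A 2 0) * hr12
      + (A 1 0 * A 2 1 - A 1 1 * A 2 0) * E12 + (A 1 0 * A 2 2 - A 1 2 * A 2 0) * E13
      + (A 1 0 * A 2 3 - A 1 3 * A 2 0) * E14 - (A 1 1 * A 2 3 - A 1 3 * A 2 1) * E15
      - (A 1 2 * A 2 3 - A 1 3 * A 2 2) * E16
  have hlamne : A 1 1 * A 2 2 - A 1 2 * A 2 1 ≠ 0 := by
    intro h
    have h4 : (0:ℝ) < s^4 := by positivity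
    rw [h] at hlam2
    norm_num at hlam2
    exact h4.ne' hlam2.symm
  -- the eight off-diagonal spatial/time entries of rows 1,2,3 vanish
  have hzero : ∀ (t : ℝ), t * (A 1 1 * A 2 2 - A 1 2 * A 2 1) = 0 → t = 0 := by
    intro t ht
    rcases mul_eq_zero.mp ht with h | h
    · exact h
    · exact absurd h hlamne
  have z10 : A 1 0 = 0 := hzero _ (by linear_combination A 1 1 * E13 - A 1 2 * E12)
  have z20 : A 2 0 = 0 := hzero _ (by linear_combination A 2 1 * E13 - A 2 2 * E12)
  have z13 : A 1 3 = 0 := hzero _ (by linear_combination A 1 2 * E15 - A 1 1 * E16)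
  have z23 : A 2 3 = 0 := hzero _ (by linear_combination A 2 2 * E15 - A 2 1 * E16)
  have z12 : A 1 2 = 0 := hzero _ (by linear_combination A 1 1 * E11 + A 1 3 * E9 - A 1 2 * E10)
  have z32 : A 3 2 = 0 := hzero _ (by linear_combination A 3 1 * E11 + A 3 3 * E9 - A 3 2 * E10)
  have z30 : A 3 0 = 0 := hzero _ (by linear_combination A 3 1 * E8 - A 3 3 * E6 - A 3 0 * E10)
  have z21 : A 2 1 = 0 := hzero _ (by linear_combination -(A 2 2) * E4 + A 2 3 * E3 + A 2 1 * E5)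
  have z31 : A 3 1 = 0 := hzero _ (by linear_combination -(A 3 2) * E4 + A 3 3 * E3 + A 3 1 * E5)
  -- diagonal relations
  have d12 : A 1 1 * A 2 2 = A 1 1 * A 2 2 - A 1 2 * A 2 1 := by
    linear_combination A 2 1 * z12
  have d13 : A 1 1 * A 3 3 = A 1 1 * A 2 2 - A 1 2 * A 2 1 := by
    linear_combination E10 + A 3 1 * z13
  have d23 : A 2 2 * A 3 3 = A 1 1 * A 2 2 - A 1 2 * A 2 1 := by
    linear_combination -E5 + A 3 2 * z23
  have hA11ne : A 1 1 ≠ 0 := by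
    intro h; apply hlamne; rw [← d12, h, zero_mul]
  have hA33ne : A 3 3 ≠ 0 := by
    intro h; apply hlamne; rw [← d13, h, mul_zero]
  have e2233 : A 2 2 = A 3 3 := mul_left_cancel₀ hA11ne (by rw [d12, d13])
  have e1122 : A 1 1 = A 2 2 := mul_right_cancel₀ hA33ne (by rw [d13, d23])
  -- column relations
  have hc00 : A 1 0 * A 1 0 + A 2 0 * A 2 0 + A 3 0 * A 3 0 - A 0 0 * A 0 0 = -s^2 := by
    have h := hcA 0 0; norm_num at h; linarith only [h]
  have hc01 : A 1 0 * A 1 1 + A 2 0 * A 2 1 + A 3 0 * A 3 1 - A 0 0 * A 0 1 = 0 := by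
    have h := hcA 0 1; norm_num [Fin.ext_iff] at h; exact h
  have hc02 : A 1 0 * A 1 2 + A 2 0 * A 2 2 + A 3 0 * A 3 2 - A 0 0 * A 0 2 = 0 := by
    have h := hcA 0 2; norm_num [Fin.ext_iff] at h; exact h
  have hc03 : A 1 0 * A 1 3 + A 2 0 * A 2 3 + A 3 0 * A 3 3 - A 0 0 * A 0 3 = 0 := by
    have h := hcA 0 3; norm_num [Fin.ext_iff] at h; exact h
  have hc11 : A 1 1 * A 1 1 + A 2 1 * A 2 1 + A 3 1 * A 3 1 - A 0 1 * A 0 1 = s^2 := by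
    have h := hcA 1 1; norm_num [Fin.ext_iff] at h; exact h
  have hA00sq : A 0 0 * A 0 0 = s^2 := by
    linear_combination -hc00 + A 1 0 * z10 + A 2 0 * z20 + A 3 0 * z30
  have hA00ne : A 0 0 ≠ 0 := by
    intro h; apply hs2.ne'; rw [← hA00sq, h]; ring
  have hA00z : ∀ (t : ℝ), A 0 0 * t = 0 → t = 0 := by
    intro t ht
    rcases mul_eq_zero.mp ht with h | h
    · exact absurd h hA00ne
    · exact h
  have z01 : A 0 1 = 0 := hA00z _ (by
    linear_combination -hc01 + A 1 1 * z10 + A 2 1 * z20 + A 3 1 * z30)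
  have z02 : A 0 2 = 0 := hA00z _ (by
    linear_combination -hc02 + A 1 2 * z10 + A 2 2 * z20 + A 3 2 * z30)
  have z03 : A 0 3 = 0 := hA00z _ (by
    linear_combination -hc03 + A 1 3 * z10 + A 2 3 * z20 + A 3 3 * z30)
  have hA11sq : A 1 1 * A 1 1 = s^2 := by
    linear_combination hc11 - A 2 1 * z21 - A 3 1 * z31 + A 0 1 * z01
  -- positivity from a point of Ω
  have hne : Ω.Nonempty := by
    rcases Set.eq_empty_or_nonempty Ω with hΩe | h
    · exfalso
      have h10 := Fintype.linearIndependent_iff.mp hnondeg (fun _ => 1)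
        (by
          funext x
          exact absurd x.2 (Set.eq_empty_iff_forall_notMem.mp hΩe (x : ℝ × ℝ))) 0
      exact one_ne_zero h10
    · exact h
  obtain ⟨x₀, hx₀⟩ := hne
  have h0 : ρs x₀ = A 0 0 * ρ x₀ := by
    have h := hrel x₀ hx₀ 0
    rw [Fin.sum_univ_four, hm, hms] at h
    simp only [Matrix.cons_val_zero, Matrix.cons_val_one, Matrix.head_cons,
      Matrix.cons_val_two, Matrix.cons_val_three, Matrix.vecHead, Matrix.vecTail,
      Matrix.cons_val_zero] at h
    rw [z01, z02, z03] at h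
    simpa using h
  have h3 : ρs x₀ * n3s x₀ = A 3 3 * (ρ x₀ * n3 x₀) := by
    have h := hrel x₀ hx₀ 3
    rw [Fin.sum_univ_four, hm, hms] at h
    simp only [Matrix.cons_val_zero, Matrix.cons_val_one, Matrix.head_cons,
      Matrix.cons_val_two, Matrix.cons_val_three, Matrix.vecHead, Matrix.vecTail,
      Matrix.cons_val_zero] at h
    rw [z30, z31, z32] at h
    simpa using h
  have hA00pos : 0 < A 0 0 := by
    by_contra hcon
    push_neg at hcon
    have h1 : A 0 0 * ρ x₀ ≤ 0 * ρ x₀ := mul_le_mul_of_nonneg_right hcon (hρpos x₀ hx₀).le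
    rw [zero_mul] at h1
    have h2 := hρspos x₀ hx₀
    linarith only [h0, h1, h2]
  have hA33pos : 0 < A 3 3 := by
    have hneg1 : ρ x₀ * n3 x₀ < 0 := mul_neg_of_pos_of_neg (hρpos x₀ hx₀) (hn3neg x₀ hx₀)
    have hneg2 : ρs x₀ * n3s x₀ < 0 := mul_neg_of_pos_of_neg (hρspos x₀ hx₀) (hn3sneg x₀ hx₀)
    by_contra hcon
    push_neg at hcon
    have h5 : 0 ≤ (-(A 3 3)) * (-(ρ x₀ * n3 x₀)) :=
      mul_nonneg (by linarith only [hcon]) (by linarith only [hneg1])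
    have h6 : A 3 3 * (ρ x₀ * n3 x₀) = (-(A 3 3)) * (-(ρ x₀ * n3 x₀)) := by ring
    linarith only [h3, h5, h6, hneg2]
  have hA11pos : 0 < A 1 1 := by rw [e1122, e2233]; exact hA33pos
  have hA0011 : A 0 0 = A 1 1 := by
    have hfac : (A 0 0 - A 1 1) * (A 0 0 + A 1 1) = 0 := by
      linear_combination hA00sq - hA11sq
    rcases mul_eq_zero.mp hfac with h | h
    · exact sub_eq_zero.mp h
    · exfalso; linarith only [h, hA00pos, hA11pos]
  refine ⟨A 1 1, hA11pos, ?_⟩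
  ext i j
  fin_cases i <;> fin_cases j <;>
    simp (config := { decide := true }) [Matrix.smul_apply, Matrix.one_apply] <;>
    first
      | exact hA0011
      | exact z01 | exact z02 | exact z03
      | exact z10 | exact z12 | exact z13
      | exact z20 | exact z21 | exact z23
      | exact z30 | exact z31 | exact z32
      | exact e1122.symm
      | exact (e1122.trans e2233).symm
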